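/- Let {E_{ij}}_{1≤i,j≤n} be operators on the unprimed factors lying in span_ℂ{V_σ : σ ∈ S_p} and satisfying the matrix-unit law E_{ij}E_{kl} = δ_{jk}E_{il}, and let {F_{kl}}_{1≤k,l≤m} be operators on the primed factors lying in span_ℂ{V'_τ : τ ∈ S_p} and satisfying F_{ij}F_{kl} = δ_{jk}F_{il}. Then for all indices, Tr( (d·P+_{p,p'}) E_{ij} F_{kl} ) = δ_{ij} δ_{kl} (1/d) Tr(E_{jj}) Tr(F_{ll}). In particular, for irreducible matrix units E^μ_{ij}, E^ν_{kl} of ℂ[S_p] with multiplicities m_μ = Tr(E^μ_{jj}), m_ν = Tr(E^ν_{ll}) in (ℂ^d)^{⊗p}, the trace equals δ_{ij} δ_{kl} m_μ m_ν / d. -/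

import Mathlib

open Matrix Kronecker

namespace WBA

/-- Configurations of `p` qudits of local dimension `d`. -/
abbrev Conf (d p : ℕ) := Fin p → Fin d

/-- Operators on `H = (ℂ^d)^{⊗ 2p}`, indexed by pairs (unprimed configuration, primed
configuration). -/
abbrev Op (d p : ℕ) := Matrix (Conf d p × Conf d p) (Conf d p × Conf d p) ℂ

/-- The projector `P⁺_{a,c'}` onto the maximally entangled state between unprimed system `a`
and primed system `c`, tensored with the identity elsewhere. -/
noncomputable def Pplus (d p : ℕ) (a c : Fin p) : Op d p :=
  Matrix.of fun xy uv =>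
    if xy.1 a = xy.2 c ∧ uv.1 a = uv.2 c ∧ (∀ j, j ≠ a → xy.1 j = uv.1 j) ∧
        (∀ j, j ≠ c → xy.2 j = uv.2 j) then
      (d : ℂ)⁻¹
    else 0

/-- `d • P⁺_{a,c'}`, i.e. the partially transposed swap `V^{t_{c'}}_{(a,c')}`. -/
noncomputable def arc (d p : ℕ) (a c : Fin p) : Op d p := (d : ℂ) • Pplus d p a c

/-- `V^(k) = ∏_{j=p-k+1}^{p} (d • P⁺_{j,j'})` (product over the last `k` systems;
`V^(0) = 1`). -/
noncomputable def Vop (d p k : ℕ) : Op d p :=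
  (((List.range p).filter (fun j => decide (p - k ≤ j))).map
    (fun j => if h : j < p then arc d p ⟨j, h⟩ ⟨j, h⟩ else 1)).prod

/-- `Q^(p) = d^{-p} V^(p)` and `Q^(k) = d^{-k} V^(k) - d^{-(k+1)} V^(k+1)` for `k < p`. -/
noncomputable def Qop (d p k : ℕ) : Op d p :=
  if k = p then ((d : ℂ) ^ p)⁻¹ • Vop d p p
  else ((d : ℂ) ^ k)⁻¹ • Vop d p k - ((d : ℂ) ^ (k + 1))⁻¹ • Vop d p (k + 1)

/-- Permutation matrix on `(ℂ^d)^{⊗ n}`: sends `e_v` to `e_{v ∘ σ⁻¹}`. -/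
noncomputable def permMat (d n : ℕ) (σ : Equiv.Perm (Fin n)) :
    Matrix (Fin n → Fin d) (Fin n → Fin d) ℂ :=
  Matrix.of fun x u => if x = u ∘ ⇑σ⁻¹ then 1 else 0

/-- `V_σ`: permutation of the unprimed factors, identity on the primed factors. -/
noncomputable def VL (d p : ℕ) (σ : Equiv.Perm (Fin p)) : Op d p :=
  (permMat d p σ) ⊗ₖ (1 : Matrix (Conf d p) (Conf d p) ℂ)

/-- `V'_τ`: permutation of the primed factors, identity on the unprimed factors. -/
noncomputable def VR (d p : ℕ) (τ : Equiv.Perm (Fin p)) : Op d p :=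
  (1 : Matrix (Conf d p) (Conf d p) ℂ) ⊗ₖ (permMat d p τ)

/-- Identification of `H` with `(ℂ^d)^{⊗ (p+p)}`. -/
def glue (d p : ℕ) : (Conf d p × Conf d p) ≃ (Fin (p + p) → Fin d) :=
  (Equiv.sumArrowEquivProdArrow (Fin p) (Fin p) (Fin d)).symm.trans
    (Equiv.arrowCongr finSumFinEquiv (Equiv.refl (Fin d)))

/-- The permutation operator `W_π`, `π ∈ S_{2p}`, permuting all `2p` tensor factors of `H`. -/
noncomputable def Wfull (d p : ℕ) (π : Equiv.Perm (Fin (p + p))) : Op d p :=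
  (permMat d (p + p) π).submatrix (glue d p) (glue d p)

/-- Partial transpose over the `p` primed factors:
`⟨x,y|M^Γ|u,v⟩ = ⟨x,v|M|u,y⟩`. -/
noncomputable def ptrans (d p : ℕ) (M : Op d p) : Op d p :=
  Matrix.of fun xy uv => M (xy.1, uv.2) (uv.1, xy.2)

/-- The algebra `A^d_{p,p}` of partially transposed permutation operators, as a
linear subspace of `End(H)`. -/
noncomputable def Apt (d p : ℕ) : Submodule ℂ (Op d p) :=
  Submodule.span ℂ {M | ∃ π : Equiv.Perm (Fin (p + p)), M = ptrans d p (Wfull d p π)}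

/-- Extension of an operator on systems `1,…,p-r,1',…,(p-r)'` by the identity on the
remaining systems. -/
noncomputable def embed (d p r : ℕ) (M : Op d (p - r)) : Op d p :=
  Matrix.of fun xy uv =>
    M (xy.1 ∘ Fin.castLE (Nat.sub_le p r), xy.2 ∘ Fin.castLE (Nat.sub_le p r))
      (uv.1 ∘ Fin.castLE (Nat.sub_le p r), uv.2 ∘ Fin.castLE (Nat.sub_le p r)) *
    (if ∀ j : Fin p, p - r ≤ (j : ℕ) → xy.1 j = uv.1 j ∧ xy.2 j = uv.2 j then 1 else 0)

/-- The ideal `M̃^(k) = span{ V_σ V'_τ Q^(k) V_π V'_ρ }` of `A^d_{p,p}`. -/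
noncomputable def Mtil (d p k : ℕ) : Submodule ℂ (Op d p) :=
  Submodule.span ℂ {M | ∃ σ τ π ρ : Equiv.Perm (Fin p),
    M = VL d p σ * VR d p τ * Qop d p k * (VL d p π * VR d p ρ)}

/-- Labels for the two irreps of `S_2`: symmetric `S` and antisymmetric `A`. -/
inductive SA
  | S
  | A
deriving DecidableEq

instance : Fintype SA := ⟨{SA.S, SA.A}, fun x => by cases x <;> simp⟩

/-- The swap operator on `ℂ^d ⊗ ℂ^d`. -/
noncomputable def Fsw (d : ℕ) : Matrix (Conf d 2) (Conf d 2) ℂ :=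
  Matrix.of fun x u => if x 0 = u 1 ∧ x 1 = u 0 then 1 else 0

/-- Symmetric and antisymmetric projectors on `ℂ^d ⊗ ℂ^d`. -/
noncomputable def Esm (d : ℕ) : SA → Matrix (Conf d 2) (Conf d 2) ℂ
  | SA.S => (2 : ℂ)⁻¹ • (1 + Fsw d)
  | SA.A => (2 : ℂ)⁻¹ • (1 - Fsw d)

/-- `E_i ⊗ E_j` on `H = (ℂ^d)^{⊗4}`. -/
noncomputable def EE (d : ℕ) (i j : SA) : Op d 2 := (Esm d i) ⊗ₖ (Esm d j)

/-- `E_i ⊗ 1` on `H = (ℂ^d)^{⊗4}`. -/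
noncomputable def EId (d : ℕ) (i : SA) : Op d 2 :=
  (Esm d i) ⊗ₖ (1 : Matrix (Conf d 2) (Conf d 2) ℂ)

/-- Multiplicities `m_S = d(d+1)/2`, `m_A = d(d-1)/2` (real valued). -/
noncomputable def mR (d : ℕ) : SA → ℝ
  | SA.S => (d : ℝ) * ((d : ℝ) + 1) / 2
  | SA.A => (d : ℝ) * ((d : ℝ) - 1) / 2

/-- Multiplicities `m_S = d(d+1)/2`, `m_A = d(d-1)/2` (complex valued). -/
noncomputable def mC (d : ℕ) : SA → ℂ
  | SA.S => (d : ℂ) * ((d : ℂ) + 1) / 2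
  | SA.A => (d : ℂ) * ((d : ℂ) - 1) / 2

/-- `V^(1) = d • P⁺_{2,2'}` for `p = 2`. -/
noncomputable def V1 (d : ℕ) : Op d 2 := arc d 2 1 1

/-- `V^(2) = d² • P⁺_{2,2'} P⁺_{1,1'}` for `p = 2`. -/
noncomputable def V2 (d : ℕ) : Op d 2 := arc d 2 1 1 * arc d 2 0 0

/-- `Q^(2) = d^{-2} V^(2)` for `p = 2`. -/
noncomputable def Q2 (d : ℕ) : Op d 2 := ((d : ℂ) ^ 2)⁻¹ • V2 d

/-- `Q^(1) = d^{-1} V^(1) - d^{-2} V^(2)` for `p = 2`. -/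
noncomputable def Q1 (d : ℕ) : Op d 2 :=
  (d : ℂ)⁻¹ • V1 d - ((d : ℂ) ^ 2)⁻¹ • V2 d

/-- `G^(2)_{kl} = (d²/√(m_k m_l)) (E_k ⊗ 1) Q^(2) (E_l ⊗ 1)`. -/
noncomputable def G2 (d : ℕ) (k l : SA) : Op d 2 :=
  ((d : ℂ) ^ 2 / ((Real.sqrt (mR d k * mR d l) : ℝ) : ℂ)) • (EId d k * Q2 d * EId d l)

/-- `G^(2) = G^(2)_{SS} + G^(2)_{AA}`. -/
noncomputable def G2sum (d : ℕ) : Op d 2 := G2 d SA.S SA.S + G2 d SA.A SA.A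

/-- The Gram coefficients `b_{SS} = (d+2)/(4d)`, `b_{SA} = b_{AS} = 1/4`,
`b_{AA} = (d-2)/(4d)`. -/
noncomputable def bc (d : ℕ) : SA → SA → ℂ
  | SA.S, SA.S => ((d : ℂ) + 2) / (4 * (d : ℂ))
  | SA.S, SA.A => 1 / 4
  | SA.A, SA.S => 1 / 4
  | SA.A, SA.A => ((d : ℂ) - 2) / (4 * (d : ℂ))

/-- `Ĝ^(1)_{[ij][kl]} = (E_i ⊗ E_j) Q^(1) (E_k ⊗ E_l)`. -/
noncomputable def Ghat1 (d : ℕ) (i j k l : SA) : Op d 2 :=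
  EE d i j * Q1 d * EE d k l

/-- `G^(1)_{[ij][kl]} = b_{ij}⁻¹ Ĝ^(1)_{[ij][kl]}`. -/
noncomputable def G1 (d : ℕ) (i j k l : SA) : Op d 2 := (bc d i j)⁻¹ • Ghat1 d i j k l

/-- `G^(1) = Σ_{ij} G^(1)_{[ij][ij]}`. -/
noncomputable def G1sum (d : ℕ) : Op d 2 := ∑ i : SA, ∑ j : SA, G1 d i j i j

/-- `G^(0)_{ij} = E_i⊗E_j - b_{ij}⁻¹ (E_i⊗E_j)Q^(1)(E_i⊗E_j)
- δ_{ij} (d²/m_i) (E_i⊗1)Q^(2)(E_i⊗1)`. -/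
noncomputable def G0 (d : ℕ) (i j : SA) : Op d 2 :=
  EE d i j - (bc d i j)⁻¹ • (EE d i j * Q1 d * EE d i j) -
    (if i = j then (d : ℂ) ^ 2 / mC d i else 0) • (EId d i * Q2 d * EId d i)


section Aux

variable {d p : ℕ}

/-- Insert value `s` at position `a` into a partial configuration `r`. -/
def emb (a : Fin p) (s : Fin d) (r : {j : Fin p // j ≠ a} → Fin d) : Conf d p :=
  fun j => if h : j = a then s else r ⟨j, h⟩

lemma emb_self (a : Fin p) (s : Fin d) (r : {j : Fin p // j ≠ a} → Fin d) :
    emb a s r a = s := by simp [emb]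

lemma emb_ne (a : Fin p) (s : Fin d) (r : {j : Fin p // j ≠ a} → Fin d) {j : Fin p}
    (h : j ≠ a) : emb a s r j = r ⟨j, h⟩ := by simp [emb, h]

/-- Splitting a configuration into the value at `a` and the rest. -/
def confEquiv (a : Fin p) : (Fin d × ({j : Fin p // j ≠ a} → Fin d)) ≃ Conf d p where
  toFun sr := emb a sr.1 sr.2
  invFun x := (x a, fun j => x j.1)
  left_inv := by
    rintro ⟨s, r⟩
    refine Prod.ext ?_ ?_
    · exact emb_self a s r
    · funext j
      exact emb_ne a s r j.2
  right_inv := by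
    intro x
    funext j
    by_cases h : j = a
    · subst h; exact emb_self _ _ _
    · exact emb_ne a _ _ h

lemma sum_conf (a : Fin p) (g : Conf d p → ℂ) :
    ∑ x, g x = ∑ s : Fin d, ∑ r : {j : Fin p // j ≠ a} → Fin d, g (emb a s r) := by
  calc ∑ x, g x = ∑ sr : Fin d × ({j : Fin p // j ≠ a} → Fin d), g (emb a sr.1 sr.2) :=
        (Fintype.sum_equiv (confEquiv a) _ g (fun sr => rfl)).symm
    _ = _ := Fintype.sum_prod_type (f := fun sr => g (emb a sr.1 sr.2))

/-- Partial trace over all unprimed-type factors except `a`. -/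
noncomputable def ptr (a : Fin p) (M : Matrix (Conf d p) (Conf d p) ℂ) :
    Matrix (Fin d) (Fin d) ℂ :=
  Matrix.of fun s t => ∑ r : {j : Fin p // j ≠ a} → Fin d, M (emb a s r) (emb a t r)

lemma ptr_apply (a : Fin p) (M : Matrix (Conf d p) (Conf d p) ℂ) (s t : Fin d) :
    ptr a M s t = ∑ r : {j : Fin p // j ≠ a} → Fin d, M (emb a s r) (emb a t r) := rfl

lemma ptr_add (a : Fin p) (M N : Matrix (Conf d p) (Conf d p) ℂ) :
    ptr a (M + N) = ptr a M + ptr a N := by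
  ext s t
  simp [ptr, Finset.sum_add_distrib]

lemma ptr_smul (a : Fin p) (c : ℂ) (M : Matrix (Conf d p) (Conf d p) ℂ) :
    ptr a (c • M) = c • ptr a M := by
  ext s t
  simp [ptr, Finset.mul_sum]

lemma ptr_zero (a : Fin p) : ptr a (0 : Matrix (Conf d p) (Conf d p) ℂ) = 0 := by
  ext s t
  simp [ptr]

lemma trace_of_ptr (a : Fin p) {M : Matrix (Conf d p) (Conf d p) ℂ} {c : ℂ}
    (h : ptr a M = c • (1 : Matrix (Fin d) (Fin d) ℂ)) :
    Matrix.trace M = (d : ℂ) * c := by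
  have h1 : Matrix.trace M = ∑ s : Fin d, ptr a M s s := by
    rw [show Matrix.trace M = ∑ x, M x x from rfl, sum_conf a (fun x => M x x)]
    rfl
  rw [h1, h]
  simp [Matrix.smul_apply, Matrix.one_apply, Finset.card_univ, mul_comm]

lemma emb_eq_comp_inv {a : Fin p} {σ : Equiv.Perm (Fin p)} {s t : Fin d}
    {r : {j : Fin p // j ≠ a} → Fin d}
    (h : emb a s r = emb a t r ∘ ⇑σ⁻¹) : s = t := by
  have hz : ∀ j, emb a s r (σ j) = emb a t r j := by
    intro j
    have := congrFun h (σ j)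
    simpa using this
  have key : ∀ k : ℕ, emb a s r ((σ ^ (k + 1)) a) = t := by
    intro k
    induction k with
    | zero =>
        simpa [pow_one, emb_self] using hz a
    | succ k ih =>
        have h1 : (σ ^ (k + 1 + 1)) a = σ ((σ ^ (k + 1)) a) := by
          rw [pow_succ']
          rfl
        rw [h1, hz ((σ ^ (k + 1)) a)]
        by_cases hc : (σ ^ (k + 1)) a = a
        · rw [hc, emb_self]
        · rw [emb_ne a t r hc]
          rw [emb_ne a s r hc] at ih
          exact ih
  obtain ⟨k, hk⟩ : ∃ k, orderOf σ = k + 1 :=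
    ⟨orderOf σ - 1, (Nat.succ_pred_eq_of_pos (orderOf_pos σ)).symm⟩
  have hkey := key k
  rw [← hk, pow_orderOf_eq_one] at hkey
  simpa [emb_self] using hkey

lemma ptr_permMat_diag (a : Fin p) (σ : Equiv.Perm (Fin p)) (s t : Fin d) :
    ptr a (permMat d p σ) s s = ptr a (permMat d p σ) t t := by
  simp only [ptr_apply]
  have hbij : Function.Bijective
      (fun (r : {j : Fin p // j ≠ a} → Fin d) => fun j => Equiv.swap s t (r j)) := by
    apply Function.Involutive.bijective
    intro r
    funext j
    simp
  refine Fintype.sum_bijective _ hbij _ _ (fun r => ?_)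
  have hw : emb a t (fun j => Equiv.swap s t (r j)) =
      fun j => Equiv.swap s t (emb a s r j) := by
    funext j
    by_cases h : j = a
    · subst h
      rw [emb_self, emb_self, Equiv.swap_apply_left]
    · rw [emb_ne a _ _ h, emb_ne a _ _ h]
  show (if emb a s r = emb a s r ∘ ⇑σ⁻¹ then (1 : ℂ) else 0) = _
  show _ = (if emb a t (fun j => Equiv.swap s t (r j)) =
      emb a t (fun j => Equiv.swap s t (r j)) ∘ ⇑σ⁻¹ then (1 : ℂ) else 0)
  rw [hw]
  refine (if_congr ?_ rfl rfl).symm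
  constructor
  · intro h
    funext j
    exact (Equiv.swap s t).injective (congrFun h j)
  · intro h
    funext j
    exact congrArg (Equiv.swap s t) (congrFun h j)

lemma ptr_permMat_scalar (hd : 0 < d) (a : Fin p) (σ : Equiv.Perm (Fin p)) :
    ∃ c : ℂ, ptr a (permMat d p σ) = c • (1 : Matrix (Fin d) (Fin d) ℂ) := by
  refine ⟨ptr a (permMat d p σ) ⟨0, hd⟩ ⟨0, hd⟩, ?_⟩
  ext s t
  rw [Matrix.smul_apply, Matrix.one_apply]
  by_cases h : s = t
  · subst h
    rw [if_pos rfl, smul_eq_mul, mul_one]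
    exact ptr_permMat_diag a σ s ⟨0, hd⟩
  · rw [if_neg h, smul_eq_mul, mul_zero, ptr_apply]
    apply Finset.sum_eq_zero
    intro r _
    show (if emb a s r = emb a t r ∘ ⇑σ⁻¹ then (1 : ℂ) else 0) = 0
    rw [if_neg]
    intro hc
    exact h (emb_eq_comp_inv hc)

lemma ptr_span_scalar (hd : 0 < d) (a : Fin p) {M : Matrix (Conf d p) (Conf d p) ℂ}
    (hM : M ∈ Submodule.span ℂ {M | ∃ σ : Equiv.Perm (Fin p), M = permMat d p σ}) :
    ∃ c : ℂ, ptr a M = c • (1 : Matrix (Fin d) (Fin d) ℂ) := by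
  induction hM using Submodule.span_induction with
  | mem x hx =>
      obtain ⟨σ, rfl⟩ := hx
      exact ptr_permMat_scalar hd a σ
  | zero => exact ⟨0, by simp [ptr_zero]⟩
  | add x y _ _ hx hy =>
      obtain ⟨c₁, h₁⟩ := hx
      obtain ⟨c₂, h₂⟩ := hy
      exact ⟨c₁ + c₂, by rw [ptr_add, h₁, h₂, add_smul]⟩
  | smul c x _ hx =>
      obtain ⟨c₁, h₁⟩ := hx
      exact ⟨c * c₁, by rw [ptr_smul, h₁, smul_smul]⟩

lemma arc_emb (hd : (d : ℂ) ≠ 0) (a : Fin p) (s s' t t' : Fin d)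
    (r₁ r₂ r₃ r₄ : {j : Fin p // j ≠ a} → Fin d) :
    arc d p a a (emb a s r₁, emb a s' r₂) (emb a t r₃, emb a t' r₄) =
      if r₃ = r₁ ∧ t = t' ∧ r₂ = r₄ ∧ s' = s then 1 else 0 := by
  have hiff : ((emb a s r₁) a = (emb a s' r₂) a ∧ (emb a t r₃) a = (emb a t' r₄) a ∧
      (∀ j, j ≠ a → emb a s r₁ j = emb a t r₃ j) ∧
      (∀ j, j ≠ a → emb a s' r₂ j = emb a t' r₄ j)) ↔
      (r₃ = r₁ ∧ t = t' ∧ r₂ = r₄ ∧ s' = s) := by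
    constructor
    · rintro ⟨h1, h2, h3, h4⟩
      rw [emb_self, emb_self] at h1 h2
      refine ⟨funext fun j => ?_, h2, funext fun j => ?_, h1.symm⟩
      · have := h3 j.1 j.2
        rw [emb_ne a s r₁ j.2, emb_ne a t r₃ j.2] at this
        exact this.symm
      · have := h4 j.1 j.2
        rw [emb_ne a s' r₂ j.2, emb_ne a t' r₄ j.2] at this
        exact this
    · rintro ⟨rfl, rfl, rfl, rfl⟩
      refine ⟨by rw [emb_self, emb_self], by rw [emb_self, emb_self],
        fun j hj => ?_, fun j hj => ?_⟩
      · rw [emb_ne a _ _ hj, emb_ne a _ _ hj]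
      · rw [emb_ne a _ _ hj, emb_ne a _ _ hj]
  show (d : ℂ) • Pplus d p a a (emb a s r₁, emb a s' r₂) (emb a t r₃, emb a t' r₄) = _
  rw [show Pplus d p a a (emb a s r₁, emb a s' r₂) (emb a t r₃, emb a t' r₄) =
      if (emb a s r₁) a = (emb a s' r₂) a ∧ (emb a t r₃) a = (emb a t' r₄) a ∧
        (∀ j, j ≠ a → emb a s r₁ j = emb a t r₃ j) ∧
        (∀ j, j ≠ a → emb a s' r₂ j = emb a t' r₄ j) then (d : ℂ)⁻¹ else 0 from rfl]
  rw [if_congr hiff rfl rfl, smul_eq_mul]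
  split_ifs with h
  · exact mul_inv_cancel₀ hd
  · exact mul_zero _

lemma trace_arc_kron (hd : 0 < d) (a : Fin p)
    (E F : Matrix (Conf d p) (Conf d p) ℂ) (cE cF : ℂ)
    (hE : ptr a E = cE • (1 : Matrix (Fin d) (Fin d) ℂ))
    (hF : ptr a F = cF • (1 : Matrix (Fin d) (Fin d) ℂ)) :
    Matrix.trace (arc d p a a * (E ⊗ₖ F)) = (d : ℂ) * cE * cF := by
  have hd' : (d : ℂ) ≠ 0 := Nat.cast_ne_zero.2 hd.ne'
  have expand : Matrix.trace (arc d p a a * (E ⊗ₖ F)) =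
      ∑ x : Conf d p, ∑ v : Conf d p, ∑ y : Conf d p, ∑ u : Conf d p,
        arc d p a a (x, y) (u, v) * (E u x * F v y) := by
    rw [show Matrix.trace (arc d p a a * (E ⊗ₖ F)) =
        ∑ x : Conf d p, ∑ y : Conf d p, ∑ u : Conf d p, ∑ v : Conf d p,
          arc d p a a (x, y) (u, v) * (E u x * F v y) from by
      simp only [Matrix.trace, Matrix.diag_apply, Matrix.mul_apply,
        Matrix.kroneckerMap_apply, Fintype.sum_prod_type]]
    refine Finset.sum_congr rfl fun x _ => ?_
    calc ∑ y : Conf d p, ∑ u : Conf d p, ∑ v : Conf d p,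
          arc d p a a (x, y) (u, v) * (E u x * F v y)
        = ∑ y : Conf d p, ∑ v : Conf d p, ∑ u : Conf d p,
          arc d p a a (x, y) (u, v) * (E u x * F v y) :=
          Finset.sum_congr rfl fun y _ => Finset.sum_comm
      _ = ∑ v : Conf d p, ∑ y : Conf d p, ∑ u : Conf d p,
          arc d p a a (x, y) (u, v) * (E u x * F v y) := Finset.sum_comm
  rw [expand]
  simp only [sum_conf a]
  simp only [arc_emb hd' a, ite_and, ite_mul, zero_mul, one_mul]
  simp only [Finset.sum_ite_eq', Finset.mem_univ, if_true]
  calc ∑ s : Fin d, ∑ r₁, ∑ t', ∑ r₄,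
        E (emb a t' r₁) (emb a s r₁) * F (emb a t' r₄) (emb a s r₄)
      = ∑ s : Fin d, ∑ t' : Fin d,
          (∑ r₁, E (emb a t' r₁) (emb a s r₁)) * (∑ r₄, F (emb a t' r₄) (emb a s r₄)) := by
        refine Finset.sum_congr rfl fun s _ => ?_
        rw [Finset.sum_comm]
        refine Finset.sum_congr rfl fun t' _ => ?_
        rw [Finset.sum_mul_sum]
    _ = ∑ s : Fin d, ∑ t' : Fin d, ptr a E t' s * ptr a F t' s := rfl
    _ = (d : ℂ) * cE * cF := by
        rw [hE, hF]
        simp [Matrix.one_apply, mul_ite, ite_mul, Finset.sum_ite_eq',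
          Finset.card_univ]
        ring
end Aux

/-- if `{E_{ij}}` is a family of matrix units inside `span{V_σ : σ ∈ S_p}`
(acting on the unprimed factors) and `{F_{kl}}` is a family of matrix units inside
`span{V'_τ : τ ∈ S_p}` (acting on the primed factors), then
`Tr((d P⁺_{p,p'}) E_{ij} F_{kl}) = δ_{ij} δ_{kl} (1/d) Tr(E_{jj}) Tr(F_{ll})`. -/
theorem trace_arc_matrix_units (d p : ℕ) (hd : 2 ≤ d) (hp : 1 ≤ p)
    (lastI : Fin p) (hlast : (lastI : ℕ) = p - 1)
    (n m : ℕ)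
    (E : Fin n → Fin n → Matrix (Conf d p) (Conf d p) ℂ)
    (F : Fin m → Fin m → Matrix (Conf d p) (Conf d p) ℂ)
    (hE : ∀ i j, E i j ∈
      Submodule.span ℂ {M | ∃ σ : Equiv.Perm (Fin p), M = permMat d p σ})
    (hF : ∀ i j, F i j ∈
      Submodule.span ℂ {M | ∃ τ : Equiv.Perm (Fin p), M = permMat d p τ})
    (hEmul : ∀ i j k l, E i j * E k l = if j = k then E i l else 0)
    (hFmul : ∀ i j k l, F i j * F k l = if j = k then F i l else 0)
    (i j : Fin n) (k l : Fin m) :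
    Matrix.trace (arc d p lastI lastI * (E i j ⊗ₖ F k l)) =
      (if i = j then 1 else 0) * (if k = l then 1 else 0) * (d : ℂ)⁻¹ *
        Matrix.trace (E j j) * Matrix.trace (F l l) := by
  have hd0 : 0 < d := lt_of_lt_of_le two_pos hd
  have hd' : (d : ℂ) ≠ 0 := Nat.cast_ne_zero.2 hd0.ne'
  obtain ⟨cE, hcE⟩ := ptr_span_scalar hd0 lastI (hE i j)
  obtain ⟨cF, hcF⟩ := ptr_span_scalar hd0 lastI (hF k l)
  have hmain := trace_arc_kron hd0 lastI (E i j) (F k l) cE cF hcE hcF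
  have hTE : Matrix.trace (E i j) = (d : ℂ) * cE := trace_of_ptr lastI hcE
  have hTF : Matrix.trace (F k l) = (d : ℂ) * cF := trace_of_ptr lastI hcF
  rw [hmain]
  by_cases hkl : k = l
  · by_cases hij : i = j
    · subst hij; subst hkl
      rw [if_pos rfl, if_pos rfl, hTE, hTF]
      field_simp
    · have hE0 : Matrix.trace (E i j) = 0 := by
        have h1 : E i j = E i i * E i j := by rw [hEmul i i i j, if_pos rfl]
        rw [h1, Matrix.trace_mul_comm, hEmul i j i i,
          if_neg (fun h => hij h.symm)]
        simp
      have hc : cE = 0 := by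
        have : (d : ℂ) * cE = 0 := by rw [← hTE]; exact hE0
        exact (mul_eq_zero.1 this).resolve_left hd'
      simp [hij, hc]
  · have hF0 : Matrix.trace (F k l) = 0 := by
      have h1 : F k l = F k k * F k l := by rw [hFmul k k k l, if_pos rfl]
      rw [h1, Matrix.trace_mul_comm, hFmul k l k k,
        if_neg (fun h => hkl h.symm)]
      simp
    have hc : cF = 0 := by
      have : (d : ℂ) * cF = 0 := by rw [← hTF]; exact hF0
      exact (mul_eq_zero.1 this).resolve_left hd'
    simp [hkl, hc]


end WBA
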